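/- arXiv:2111.08945 — 3 statements merged into one kernel-verified Lean document; each statement's English description precedes it below -/
import Mathlib

section
/- For every integer k ≥ 8, there exists a coalition partition Ψ of the path P_k with four parts such that the coalition graph CG(P_k, Ψ) is isomorphic to 2K_2 (two disjoint edges). -/
open SimpleGraph

attribute [local instance] Classical.propDecidable

def Dominates {V : Type*} (G : SimpleGraph V) (S : Set V) : Prop :=
  ∀ v, v ∉ S → ∃ u ∈ S, G.Adj u v

def Coalition {V : Type*} (G : SimpleGraph V) (A B : Set V) : Prop :=
  Disjoint A B ∧ ¬ Dominates G A ∧ ¬ Dominates G B ∧ Dominates G (A ∪ B)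

def IsCoalitionPartition {V : Type*} (G : SimpleGraph V) (P : Finset (Set V)) : Prop :=
  (∀ A ∈ P, A.Nonempty) ∧
  (∀ A ∈ P, ∀ B ∈ P, A ≠ B → Disjoint A B) ∧
  (∀ v : V, ∃ A ∈ P, v ∈ A) ∧
  (∀ A ∈ P, (Dominates G A ∧ ∃ v, A = {v}) ∨
    (¬ Dominates G A ∧ ∃ B ∈ P, B ≠ A ∧ Coalition G A B))

noncomputable def coalitionNumber {V : Type*} (G : SimpleGraph V) : ℕ :=
  sSup {n | ∃ P : Finset (Set V), IsCoalitionPartition G P ∧ P.card = n}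

def coalitionGraph {V : Type*} (G : SimpleGraph V) (P : Finset (Set V)) :
    SimpleGraph {A : Set V // A ∈ P} where
  Adj A B := Coalition G A.1 B.1
  symm := by
    constructor
    rintro A B ⟨d, na, nb, u⟩
    exact ⟨d.symm, nb, na, by rwa [Set.union_comm]⟩
  loopless := by
    constructor
    rintro ⟨A, hA⟩ ⟨d, na, nb, u⟩
    rw [Set.union_self] at u
    exact na u

/-- `2K_2`: two disjoint edges on four vertices. -/
def twoK2 : SimpleGraph (Fin 4) :=
  SimpleGraph.fromEdgeSet {s(0, 1), s(2, 3)}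

/- Auxiliary construction for `stmt16`. -/

def SA (k : ℕ) : Set (Fin k) := {v | v.val = 0 ∨ v.val = 6}
def SB (k : ℕ) : Set (Fin k) := {v | v.val = 3 ∨ v.val = 4 ∨ (8 ≤ v.val ∧ v.val % 2 = 0)}
def SC (k : ℕ) : Set (Fin k) := {v | v.val = 1 ∨ v.val = 2}
def SD (k : ℕ) : Set (Fin k) := {v | v.val = 5 ∨ v.val = 7 ∨ (8 ≤ v.val ∧ v.val % 2 = 1)}

lemma dom_mono {V : Type*} {G : SimpleGraph V} {S T : Set V} (h : S ⊆ T)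
    (hS : Dominates G S) : Dominates G T := by
  intro v hv
  obtain ⟨u, hu, hadj⟩ := hS v (fun hv' => hv (h hv'))
  exact ⟨u, h hu, hadj⟩

section stmt16aux

variable {k : ℕ} (hk : 8 ≤ k)

/-- Generic non-domination certificate. -/
lemma notdom_of_witness (S : Set (Fin k)) (m : ℕ) (hm : m < k)
    (h0 : (⟨m, hm⟩ : Fin k) ∉ S)
    (h : ∀ u : Fin k, u ∈ S → ¬(u.val + 1 = m ∨ m + 1 = u.val)) :
    ¬ Dominates (pathGraph k) S := by
  intro hd
  obtain ⟨u, hu, hadj⟩ := hd ⟨m, hm⟩ h0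
  rw [pathGraph_adj] at hadj
  exact h u hu hadj

include hk

lemma notdomBD : ¬ Dominates (pathGraph k) (SB k ∪ SD k) := by
  apply notdom_of_witness (m := 0) (hm := by omega)
  · intro h
    rcases h with h | h <;> simp only [SB, SD, Set.mem_setOf_eq] at h <;> omega
  · intro u hu hadj
    rcases hu with h | h <;> simp only [SB, SD, Set.mem_setOf_eq] at h <;> omega

lemma notdomAC : ¬ Dominates (pathGraph k) (SA k ∪ SC k) := by
  apply notdom_of_witness (m := 4) (hm := by omega)
  · intro h
    rcases h with h | h <;> simp only [SA, SC, Set.mem_setOf_eq] at h <;> omega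
  · intro u hu hadj
    rcases hu with h | h <;> simp only [SA, SC, Set.mem_setOf_eq] at h <;> omega

lemma notdomAD : ¬ Dominates (pathGraph k) (SA k ∪ SD k) := by
  apply notdom_of_witness (m := 2) (hm := by omega)
  · intro h
    rcases h with h | h <;> simp only [SA, SD, Set.mem_setOf_eq] at h <;> omega
  · intro u hu hadj
    rcases hu with h | h <;> simp only [SA, SD, Set.mem_setOf_eq] at h <;> omega

lemma notdomBC : ¬ Dominates (pathGraph k) (SB k ∪ SC k) := by
  apply notdom_of_witness (m := 6) (hm := by omega)
  · intro h
    rcases h with h | h <;> simp only [SB, SC, Set.mem_setOf_eq] at h <;> omega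
  · intro u hu hadj
    rcases hu with h | h <;> simp only [SB, SC, Set.mem_setOf_eq] at h <;> omega

lemma domAB : Dominates (pathGraph k) (SA k ∪ SB k) := by
  intro v hv
  simp only [SA, SB, Set.mem_union, Set.mem_setOf_eq, not_or] at hv
  have hlt := v.isLt
  have hcase : v.val = 1 ∨ v.val = 2 ∨ v.val = 5 ∨ v.val = 7 ∨ (9 ≤ v.val ∧ v.val % 2 = 1) := by
    omega
  rcases hcase with h | h | h | h | h
  · exact ⟨⟨0, by omega⟩, Or.inl (Or.inl rfl), by rw [pathGraph_adj]; simp; omega⟩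
  · exact ⟨⟨3, by omega⟩, Or.inr (Or.inl rfl), by rw [pathGraph_adj]; simp; omega⟩
  · exact ⟨⟨4, by omega⟩, Or.inr (Or.inr (Or.inl rfl)), by rw [pathGraph_adj]; simp; omega⟩
  · exact ⟨⟨6, by omega⟩, Or.inl (Or.inr rfl), by rw [pathGraph_adj]; simp; omega⟩
  · exact ⟨⟨v.val - 1, by omega⟩, Or.inr (Or.inr (Or.inr (by simp; omega))),
      by rw [pathGraph_adj]; simp; omega⟩

lemma domCD : Dominates (pathGraph k) (SC k ∪ SD k) := by
  intro v hv
  simp only [SC, SD, Set.mem_union, Set.mem_setOf_eq, not_or] at hv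
  have hlt := v.isLt
  have hcase : v.val = 0 ∨ v.val = 3 ∨ v.val = 4 ∨ v.val = 6 ∨ (8 ≤ v.val ∧ v.val % 2 = 0) := by
    omega
  rcases hcase with h | h | h | h | h
  · exact ⟨⟨1, by omega⟩, Or.inl (Or.inl rfl), by rw [pathGraph_adj]; simp; omega⟩
  · exact ⟨⟨2, by omega⟩, Or.inl (Or.inr rfl), by rw [pathGraph_adj]; simp; omega⟩
  · exact ⟨⟨5, by omega⟩, Or.inr (Or.inl rfl), by rw [pathGraph_adj]; simp; omega⟩
  · exact ⟨⟨5, by omega⟩, Or.inr (Or.inl rfl), by rw [pathGraph_adj]; simp; omega⟩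
  · refine ⟨⟨v.val - 1, by omega⟩, Or.inr ?_, by rw [pathGraph_adj]; simp; omega⟩
    by_cases h7 : v.val = 8
    · exact Or.inr (Or.inl (by simp [h7]))
    · exact Or.inr (Or.inr (by simp; omega))

lemma notdomA : ¬ Dominates (pathGraph k) (SA k) :=
  fun h => notdomAC hk (dom_mono Set.subset_union_left h)

lemma notdomB : ¬ Dominates (pathGraph k) (SB k) :=
  fun h => notdomBD hk (dom_mono Set.subset_union_left h)

lemma notdomC : ¬ Dominates (pathGraph k) (SC k) :=
  fun h => notdomAC hk (dom_mono Set.subset_union_right h)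

lemma notdomD : ¬ Dominates (pathGraph k) (SD k) :=
  fun h => notdomBD hk (dom_mono Set.subset_union_right h)

omit hk

lemma disjAB : Disjoint (SA k) (SB k) := by
  rw [Set.disjoint_left]; intro v h h'
  simp only [SA, SB, Set.mem_setOf_eq] at h h'; omega

lemma disjAC : Disjoint (SA k) (SC k) := by
  rw [Set.disjoint_left]; intro v h h'
  simp only [SA, SC, Set.mem_setOf_eq] at h h'; omega

lemma disjAD : Disjoint (SA k) (SD k) := by
  rw [Set.disjoint_left]; intro v h h'
  simp only [SA, SD, Set.mem_setOf_eq] at h h'; omega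

lemma disjBC : Disjoint (SB k) (SC k) := by
  rw [Set.disjoint_left]; intro v h h'
  simp only [SB, SC, Set.mem_setOf_eq] at h h'; omega

lemma disjBD : Disjoint (SB k) (SD k) := by
  rw [Set.disjoint_left]; intro v h h'
  simp only [SB, SD, Set.mem_setOf_eq] at h h'; omega

lemma disjCD : Disjoint (SC k) (SD k) := by
  rw [Set.disjoint_left]; intro v h h'
  simp only [SC, SD, Set.mem_setOf_eq] at h h'; omega

include hk

lemma coalAB : Coalition (pathGraph k) (SA k) (SB k) :=
  ⟨disjAB, notdomA hk, notdomB hk, domAB hk⟩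

lemma coalCD : Coalition (pathGraph k) (SC k) (SD k) :=
  ⟨disjCD, notdomC hk, notdomD hk, domCD hk⟩

lemma neAB : SA k ≠ SB k := by
  intro h
  have h0 : (⟨0, by omega⟩ : Fin k) ∈ SA k := Or.inl rfl
  rw [h] at h0
  simp only [SB, Set.mem_setOf_eq] at h0; omega

lemma neAC : SA k ≠ SC k := by
  intro h
  have h0 : (⟨0, by omega⟩ : Fin k) ∈ SA k := Or.inl rfl
  rw [h] at h0
  simp only [SC, Set.mem_setOf_eq] at h0; omega

lemma neAD : SA k ≠ SD k := by
  intro h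
  have h0 : (⟨0, by omega⟩ : Fin k) ∈ SA k := Or.inl rfl
  rw [h] at h0
  simp only [SD, Set.mem_setOf_eq] at h0; omega

lemma neBC : SB k ≠ SC k := by
  intro h
  have h0 : (⟨3, by omega⟩ : Fin k) ∈ SB k := Or.inl rfl
  rw [h] at h0
  simp only [SC, Set.mem_setOf_eq] at h0; omega

lemma neBD : SB k ≠ SD k := by
  intro h
  have h0 : (⟨3, by omega⟩ : Fin k) ∈ SB k := Or.inl rfl
  rw [h] at h0
  simp only [SD, Set.mem_setOf_eq] at h0; omega

lemma neCD : SC k ≠ SD k := by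
  intro h
  have h0 : (⟨1, by omega⟩ : Fin k) ∈ SC k := Or.inl rfl
  rw [h] at h0
  simp only [SD, Set.mem_setOf_eq] at h0; omega

end stmt16aux

theorem stmt16 (k : ℕ) (hk : 8 ≤ k) :
    ∃ P : Finset (Set (Fin k)),
      IsCoalitionPartition (SimpleGraph.pathGraph k) P ∧ P.card = 4 ∧
      Nonempty ((coalitionGraph (SimpleGraph.pathGraph k) P) ≃g twoK2) := by
  refine ⟨{SA k, SB k, SC k, SD k}, ⟨?_, ?_, ?_, ?_⟩, ?_, ?_⟩
  · -- nonempty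
    intro A hA
    simp only [Finset.mem_insert, Finset.mem_singleton] at hA
    rcases hA with rfl | rfl | rfl | rfl
    · exact ⟨⟨0, by omega⟩, Or.inl rfl⟩
    · exact ⟨⟨3, by omega⟩, Or.inl rfl⟩
    · exact ⟨⟨1, by omega⟩, Or.inl rfl⟩
    · exact ⟨⟨5, by omega⟩, Or.inl rfl⟩
  · -- pairwise disjoint
    intro A hA B hB hne
    simp only [Finset.mem_insert, Finset.mem_singleton] at hA hB
    rcases hA with rfl | rfl | rfl | rfl <;> rcases hB with rfl | rfl | rfl | rfl <;>
      first
        | exact absurd rfl hne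
        | exact disjAB | exact disjAC | exact disjAD | exact disjBC | exact disjBD
        | exact disjCD
        | exact disjAB.symm | exact disjAC.symm | exact disjAD.symm | exact disjBC.symm
        | exact disjBD.symm | exact disjCD.symm
  · -- cover
    intro v
    have hlt := v.isLt
    have hcase : (v.val = 0 ∨ v.val = 6) ∨ (v.val = 3 ∨ v.val = 4 ∨ (8 ≤ v.val ∧ v.val % 2 = 0))
        ∨ (v.val = 1 ∨ v.val = 2) ∨ (v.val = 5 ∨ v.val = 7 ∨ (8 ≤ v.val ∧ v.val % 2 = 1)) := by
      omega
    rcases hcase with h | h | h | h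
    · exact ⟨SA k, by simp, h⟩
    · exact ⟨SB k, by simp, h⟩
    · exact ⟨SC k, by simp, h⟩
    · exact ⟨SD k, by simp, h⟩
  · -- each set in a coalition
    intro A hA
    simp only [Finset.mem_insert, Finset.mem_singleton] at hA
    rcases hA with rfl | rfl | rfl | rfl
    · exact Or.inr ⟨notdomA hk, SB k, by simp, (neAB hk).symm, coalAB hk⟩
    · exact Or.inr ⟨notdomB hk, SA k, by simp, neAB hk,
        ⟨disjAB.symm, notdomB hk, notdomA hk, by rw [Set.union_comm]; exact domAB hk⟩⟩
    · exact Or.inr ⟨notdomC hk, SD k, by simp, (neCD hk).symm, coalCD hk⟩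
    · exact Or.inr ⟨notdomD hk, SC k, by simp, neCD hk,
        ⟨disjCD.symm, notdomD hk, notdomC hk, by rw [Set.union_comm]; exact domCD hk⟩⟩
  · -- card
    rw [Finset.card_insert_of_notMem, Finset.card_insert_of_notMem,
      Finset.card_insert_of_notMem, Finset.card_singleton]
    · simp [neCD hk]
    · simp [neBC hk, neBD hk]
    · simp [neAB hk, neAC hk, neAD hk]
  · -- iso
    set P : Finset (Set (Fin k)) := {SA k, SB k, SC k, SD k} with hP
    have mA : SA k ∈ P := by simp [hP]
    have mB : SB k ∈ P := by simp [hP]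
    have mC : SC k ∈ P := by simp [hP]
    have mD : SD k ∈ P := by simp [hP]
    let g : Fin 4 → {A : Set (Fin k) // A ∈ P} := fun i =>
      match i with
      | 0 => ⟨SA k, mA⟩
      | 1 => ⟨SB k, mB⟩
      | 2 => ⟨SC k, mC⟩
      | 3 => ⟨SD k, mD⟩
    have hinj : Function.Injective g := by
      intro a b h
      fin_cases a <;> fin_cases b <;>
        first
          | rfl
          | (exfalso
             have h' := congrArg Subtype.val h
             first
               | exact neAB hk h' | exact neAC hk h' | exact neAD hk h'
               | exact neBC hk h' | exact neBD hk h' | exact neCD hk h'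
               | exact neAB hk h'.symm | exact neAC hk h'.symm | exact neAD hk h'.symm
               | exact neBC hk h'.symm | exact neBD hk h'.symm | exact neCD hk h'.symm)
    have hsurj : Function.Surjective g := by
      rintro ⟨S, hS⟩
      simp only [hP, Finset.mem_insert, Finset.mem_singleton] at hS
      rcases hS with rfl | rfl | rfl | rfl
      · exact ⟨0, rfl⟩
      · exact ⟨1, rfl⟩
      · exact ⟨2, rfl⟩
      · exact ⟨3, rfl⟩
    have hAB := coalAB hk
    have hCD := coalCD hk
    have hnAC : ¬ Coalition (pathGraph k) (SA k) (SC k) :=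
      fun h => notdomAC hk h.2.2.2
    have hnCA : ¬ Coalition (pathGraph k) (SC k) (SA k) :=
      fun h => notdomAC hk (by have hd := h.2.2.2; rwa [Set.union_comm] at hd)
    have hnAD : ¬ Coalition (pathGraph k) (SA k) (SD k) :=
      fun h => notdomAD hk h.2.2.2
    have hnDA : ¬ Coalition (pathGraph k) (SD k) (SA k) :=
      fun h => notdomAD hk (by have hd := h.2.2.2; rwa [Set.union_comm] at hd)
    have hnBC : ¬ Coalition (pathGraph k) (SB k) (SC k) :=
      fun h => notdomBC hk h.2.2.2
    have hnCB : ¬ Coalition (pathGraph k) (SC k) (SB k) :=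
      fun h => notdomBC hk (by have hd := h.2.2.2; rwa [Set.union_comm] at hd)
    have hnBD : ¬ Coalition (pathGraph k) (SB k) (SD k) :=
      fun h => notdomBD hk h.2.2.2
    have hnDB : ¬ Coalition (pathGraph k) (SD k) (SB k) :=
      fun h => notdomBD hk (by have hd := h.2.2.2; rwa [Set.union_comm] at hd)
    have hBA : Coalition (pathGraph k) (SB k) (SA k) :=
      ⟨disjAB.symm, notdomB hk, notdomA hk, by rw [Set.union_comm]; exact domAB hk⟩
    have hDC : Coalition (pathGraph k) (SD k) (SC k) :=
      ⟨disjCD.symm, notdomD hk, notdomC hk, by rw [Set.union_comm]; exact domCD hk⟩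
    have hnAA : ¬ Coalition (pathGraph k) (SA k) (SA k) :=
      fun h => notdomA hk (by have := h.2.2.2; rwa [Set.union_self] at this)
    have hnBB : ¬ Coalition (pathGraph k) (SB k) (SB k) :=
      fun h => notdomB hk (by have := h.2.2.2; rwa [Set.union_self] at this)
    have hnCC : ¬ Coalition (pathGraph k) (SC k) (SC k) :=
      fun h => notdomC hk (by have := h.2.2.2; rwa [Set.union_self] at this)
    have hnDD : ¬ Coalition (pathGraph k) (SD k) (SD k) :=
      fun h => notdomD hk (by have := h.2.2.2; rwa [Set.union_self] at this)
    refine ⟨(⟨Equiv.ofBijective g ⟨hinj, hsurj⟩, ?_⟩ : twoK2 ≃g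
      coalitionGraph (pathGraph k) P).symm⟩
    intro a b
    show (coalitionGraph (pathGraph k) P).Adj (g a) (g b) ↔ twoK2.Adj a b
    fin_cases a <;> fin_cases b <;>
      first
        | exact iff_of_true hAB (by simp [twoK2])
        | exact iff_of_true hBA (by simp [twoK2])
        | exact iff_of_true hCD (by simp [twoK2])
        | exact iff_of_true hDC (by simp [twoK2])
        | exact iff_of_false hnAC (by simp [twoK2]) | exact iff_of_false hnCA (by simp [twoK2])
        | exact iff_of_false hnAD (by simp [twoK2]) | exact iff_of_false hnDA (by simp [twoK2])
        | exact iff_of_false hnBC (by simp [twoK2]) | exact iff_of_false hnCB (by simp [twoK2])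
        | exact iff_of_false hnBD (by simp [twoK2]) | exact iff_of_false hnDB (by simp [twoK2])
        | exact iff_of_false hnAA (by simp [twoK2]) | exact iff_of_false hnBB (by simp [twoK2])
        | exact iff_of_false hnCC (by simp [twoK2]) | exact iff_of_false hnDD (by simp [twoK2])
end

section
/- For every integer k ≥ 10, there exists a coalition partition Ψ of the path P_k with six parts whose coalition graph CG(P_k, Ψ) is isomorphic to the double star S(2,2). -/
open SimpleGraph

attribute [local instance] Classical.propDecidable

/-- The double star `S(2,2)`: adjacent centers `0` and `1`, with `0` having leaf
neighbors `2, 3` and `1` having leaf neighbors `4, 5`. -/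
def doubleStar22 : SimpleGraph (Fin 6) :=
  SimpleGraph.fromEdgeSet {s(0, 1), s(0, 2), s(0, 3), s(1, 4), s(1, 5)}

namespace Stmt17Aux

open SimpleGraph

variable {k : ℕ}

/-- Part 1 (a center): `{0, 5} ∪ {even i : i ≥ 8}`. -/
def B1 (k : ℕ) : Set (Fin k) := {v | v.val = 0 ∨ v.val = 5 ∨ (8 ≤ v.val ∧ v.val % 2 = 0)}
/-- Part 2 (a center): `{1, 4} ∪ {odd i : i ≥ 9}`. -/
def B2 (k : ℕ) : Set (Fin k) := {v | v.val = 1 ∨ v.val = 4 ∨ (9 ≤ v.val ∧ v.val % 2 = 1)}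
def B3 (k : ℕ) : Set (Fin k) := {v | v.val = 2}
def B4 (k : ℕ) : Set (Fin k) := {v | v.val = 3}
def B5 (k : ℕ) : Set (Fin k) := {v | v.val = 6}
def B6 (k : ℕ) : Set (Fin k) := {v | v.val = 7}

noncomputable def PK (k : ℕ) : Finset (Set (Fin k)) := {B1 k, B2 k, B3 k, B4 k, B5 k, B6 k}

lemma exists_mem_adj {S : Set (Fin k)} {v : Fin k} (t : ℕ) (ht : t < k)
    (hmem : (⟨t, ht⟩ : Fin k) ∈ S) (hadj : t + 1 = v.val ∨ v.val + 1 = t) :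
    ∃ u ∈ S, (pathGraph k).Adj u v :=
  ⟨⟨t, ht⟩, hmem, pathGraph_adj.mpr hadj⟩

/-- `B1` dominates every vertex other than `2` and `3`. -/
lemma dom1 (hk : 10 ≤ k) (v : Fin k) (h2 : v.val ≠ 2) (h3 : v.val ≠ 3) (hv : v ∉ B1 k) :
    ∃ u ∈ B1 k, (pathGraph k).Adj u v := by
  simp only [B1, Set.mem_setOf_eq] at hv
  have hlt := v.isLt
  have hc : v.val = 1 ∨ v.val = 4 ∨ v.val = 6 ∨ v.val = 7 ∨ (9 ≤ v.val ∧ v.val % 2 = 1) := by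
    omega
  rcases hc with h | h | h | h | h
  · exact exists_mem_adj 0 (by omega) (Or.inl rfl) (by omega)
  · exact exists_mem_adj 5 (by omega) (Or.inr (Or.inl rfl)) (by omega)
  · exact exists_mem_adj 5 (by omega) (Or.inr (Or.inl rfl)) (by omega)
  · exact exists_mem_adj 8 (by omega) (Or.inr (Or.inr (by show 8 ≤ 8 ∧ 8 % 2 = 0; omega))) (by omega)
  · exact exists_mem_adj (v.val - 1) (by omega) (Or.inr (Or.inr (by simp only [Fin.val_mk]; omega)))
      (by omega)

/-- `B2` dominates every vertex other than `6` and `7`. -/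
lemma dom2 (hk : 10 ≤ k) (v : Fin k) (h6 : v.val ≠ 6) (h7 : v.val ≠ 7) (hv : v ∉ B2 k) :
    ∃ u ∈ B2 k, (pathGraph k).Adj u v := by
  simp only [B2, Set.mem_setOf_eq] at hv
  have hlt := v.isLt
  have hc : v.val = 0 ∨ v.val = 2 ∨ v.val = 3 ∨ v.val = 5 ∨ v.val = 8 ∨
      (10 ≤ v.val ∧ v.val % 2 = 0) := by omega
  rcases hc with h | h | h | h | h | h
  · exact exists_mem_adj 1 (by omega) (Or.inl rfl) (by omega)
  · exact exists_mem_adj 1 (by omega) (Or.inl rfl) (by omega)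
  · exact exists_mem_adj 4 (by omega) (Or.inr (Or.inl rfl)) (by omega)
  · exact exists_mem_adj 4 (by omega) (Or.inr (Or.inl rfl)) (by omega)
  · exact exists_mem_adj 9 (by omega) (Or.inr (Or.inr (by show 9 ≤ 9 ∧ 9 % 2 = 1; omega))) (by omega)
  · exact exists_mem_adj (v.val - 1) (by omega) (Or.inr (Or.inr (by simp only [Fin.val_mk]; omega)))
      (by omega)

lemma dom_12 (hk : 10 ≤ k) : Dominates (pathGraph k) (B1 k ∪ B2 k) := by
  intro v hv
  have h1 : v ∉ B1 k := fun h => hv (Or.inl h)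
  by_cases h2 : v.val = 2
  · exact exists_mem_adj 1 (by omega) (Or.inr (Or.inl rfl)) (by omega)
  by_cases h3 : v.val = 3
  · exact exists_mem_adj 4 (by omega) (Or.inr (Or.inr (Or.inl rfl))) (by omega)
  obtain ⟨u, hu, ha⟩ := dom1 hk v h2 h3 h1
  exact ⟨u, Or.inl hu, ha⟩

lemma dom_13 (hk : 10 ≤ k) : Dominates (pathGraph k) (B1 k ∪ B3 k) := by
  intro v hv
  have h1 : v ∉ B1 k := fun h => hv (Or.inl h)
  have h2 : v.val ≠ 2 := fun h => hv (Or.inr h)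
  by_cases h3 : v.val = 3
  · exact exists_mem_adj 2 (by omega) (Or.inr rfl) (by omega)
  obtain ⟨u, hu, ha⟩ := dom1 hk v h2 h3 h1
  exact ⟨u, Or.inl hu, ha⟩

lemma dom_14 (hk : 10 ≤ k) : Dominates (pathGraph k) (B1 k ∪ B4 k) := by
  intro v hv
  have h1 : v ∉ B1 k := fun h => hv (Or.inl h)
  have h3 : v.val ≠ 3 := fun h => hv (Or.inr h)
  by_cases h2 : v.val = 2
  · exact exists_mem_adj 3 (by omega) (Or.inr rfl) (by omega)
  obtain ⟨u, hu, ha⟩ := dom1 hk v h2 h3 h1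
  exact ⟨u, Or.inl hu, ha⟩

lemma dom_25 (hk : 10 ≤ k) : Dominates (pathGraph k) (B2 k ∪ B5 k) := by
  intro v hv
  have h1 : v ∉ B2 k := fun h => hv (Or.inl h)
  have h6 : v.val ≠ 6 := fun h => hv (Or.inr h)
  by_cases h7 : v.val = 7
  · exact exists_mem_adj 6 (by omega) (Or.inr rfl) (by omega)
  obtain ⟨u, hu, ha⟩ := dom2 hk v h6 h7 h1
  exact ⟨u, Or.inl hu, ha⟩

lemma dom_26 (hk : 10 ≤ k) : Dominates (pathGraph k) (B2 k ∪ B6 k) := by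
  intro v hv
  have h1 : v ∉ B2 k := fun h => hv (Or.inl h)
  have h7 : v.val ≠ 7 := fun h => hv (Or.inr h)
  by_cases h6 : v.val = 6
  · exact exists_mem_adj 7 (by omega) (Or.inr rfl) (by omega)
  obtain ⟨u, hu, ha⟩ := dom2 hk v h6 h7 h1
  exact ⟨u, Or.inl hu, ha⟩

lemma not_dom_of (S : Set (Fin k)) (m : ℕ) (hm : m < k)
    (h0 : (⟨m, hm⟩ : Fin k) ∉ S)
    (h : ∀ u : Fin k, u ∈ S → ¬(u.val + 1 = m ∨ m + 1 = u.val)) :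
    ¬ Dominates (pathGraph k) S := by
  intro hd
  obtain ⟨u, hu, ha⟩ := hd _ h0
  exact h u hu (pathGraph_adj.mp ha)

lemma ndom_1 (hk : 10 ≤ k) : ¬ Dominates (pathGraph k) (B1 k) := by
  refine not_dom_of _ 2 (by omega) ?_ ?_
  · simp only [B1, Set.mem_setOf_eq, Fin.val_mk]; omega
  · intro u hu; simp only [B1, Set.mem_setOf_eq] at hu; omega

lemma ndom_2 (hk : 10 ≤ k) : ¬ Dominates (pathGraph k) (B2 k) := by
  refine not_dom_of _ 6 (by omega) ?_ ?_
  · simp only [B2, Set.mem_setOf_eq, Fin.val_mk]; omega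
  · intro u hu; simp only [B2, Set.mem_setOf_eq] at hu; omega

lemma ndom_3 (hk : 10 ≤ k) : ¬ Dominates (pathGraph k) (B3 k) := by
  refine not_dom_of _ 0 (by omega) ?_ ?_
  · simp only [B3, Set.mem_setOf_eq, Fin.val_mk]; omega
  · intro u hu; simp only [B3, Set.mem_setOf_eq] at hu; omega

lemma ndom_4 (hk : 10 ≤ k) : ¬ Dominates (pathGraph k) (B4 k) := by
  refine not_dom_of _ 0 (by omega) ?_ ?_
  · simp only [B4, Set.mem_setOf_eq, Fin.val_mk]; omega
  · intro u hu; simp only [B4, Set.mem_setOf_eq] at hu; omega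

lemma ndom_5 (hk : 10 ≤ k) : ¬ Dominates (pathGraph k) (B5 k) := by
  refine not_dom_of _ 0 (by omega) ?_ ?_
  · simp only [B5, Set.mem_setOf_eq, Fin.val_mk]; omega
  · intro u hu; simp only [B5, Set.mem_setOf_eq] at hu; omega

lemma ndom_6 (hk : 10 ≤ k) : ¬ Dominates (pathGraph k) (B6 k) := by
  refine not_dom_of _ 0 (by omega) ?_ ?_
  · simp only [B6, Set.mem_setOf_eq, Fin.val_mk]; omega
  · intro u hu; simp only [B6, Set.mem_setOf_eq] at hu; omega

lemma ndom_15 (hk : 10 ≤ k) : ¬ Dominates (pathGraph k) (B1 k ∪ B5 k) := by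
  refine not_dom_of _ 2 (by omega) ?_ ?_
  · simp only [Set.mem_union, B1, B5, Set.mem_setOf_eq, Fin.val_mk]; omega
  · intro u hu; simp only [Set.mem_union, B1, B5, Set.mem_setOf_eq] at hu; omega

lemma ndom_16 (hk : 10 ≤ k) : ¬ Dominates (pathGraph k) (B1 k ∪ B6 k) := by
  refine not_dom_of _ 2 (by omega) ?_ ?_
  · simp only [Set.mem_union, B1, B6, Set.mem_setOf_eq, Fin.val_mk]; omega
  · intro u hu; simp only [Set.mem_union, B1, B6, Set.mem_setOf_eq] at hu; omega

lemma ndom_23 (hk : 10 ≤ k) : ¬ Dominates (pathGraph k) (B2 k ∪ B3 k) := by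
  refine not_dom_of _ 6 (by omega) ?_ ?_
  · simp only [Set.mem_union, B2, B3, Set.mem_setOf_eq, Fin.val_mk]; omega
  · intro u hu; simp only [Set.mem_union, B2, B3, Set.mem_setOf_eq] at hu; omega

lemma ndom_24 (hk : 10 ≤ k) : ¬ Dominates (pathGraph k) (B2 k ∪ B4 k) := by
  refine not_dom_of _ 6 (by omega) ?_ ?_
  · simp only [Set.mem_union, B2, B4, Set.mem_setOf_eq, Fin.val_mk]; omega
  · intro u hu; simp only [Set.mem_union, B2, B4, Set.mem_setOf_eq] at hu; omega

lemma ndom_34 (hk : 10 ≤ k) : ¬ Dominates (pathGraph k) (B3 k ∪ B4 k) := by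
  refine not_dom_of _ 0 (by omega) ?_ ?_
  · simp only [Set.mem_union, B3, B4, Set.mem_setOf_eq, Fin.val_mk]; omega
  · intro u hu; simp only [Set.mem_union, B3, B4, Set.mem_setOf_eq] at hu; omega

lemma ndom_35 (hk : 10 ≤ k) : ¬ Dominates (pathGraph k) (B3 k ∪ B5 k) := by
  refine not_dom_of _ 0 (by omega) ?_ ?_
  · simp only [Set.mem_union, B3, B5, Set.mem_setOf_eq, Fin.val_mk]; omega
  · intro u hu; simp only [Set.mem_union, B3, B5, Set.mem_setOf_eq] at hu; omega

lemma ndom_36 (hk : 10 ≤ k) : ¬ Dominates (pathGraph k) (B3 k ∪ B6 k) := by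
  refine not_dom_of _ 0 (by omega) ?_ ?_
  · simp only [Set.mem_union, B3, B6, Set.mem_setOf_eq, Fin.val_mk]; omega
  · intro u hu; simp only [Set.mem_union, B3, B6, Set.mem_setOf_eq] at hu; omega

lemma ndom_45 (hk : 10 ≤ k) : ¬ Dominates (pathGraph k) (B4 k ∪ B5 k) := by
  refine not_dom_of _ 0 (by omega) ?_ ?_
  · simp only [Set.mem_union, B4, B5, Set.mem_setOf_eq, Fin.val_mk]; omega
  · intro u hu; simp only [Set.mem_union, B4, B5, Set.mem_setOf_eq] at hu; omega

lemma ndom_46 (hk : 10 ≤ k) : ¬ Dominates (pathGraph k) (B4 k ∪ B6 k) := by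
  refine not_dom_of _ 0 (by omega) ?_ ?_
  · simp only [Set.mem_union, B4, B6, Set.mem_setOf_eq, Fin.val_mk]; omega
  · intro u hu; simp only [Set.mem_union, B4, B6, Set.mem_setOf_eq] at hu; omega

lemma ndom_56 (hk : 10 ≤ k) : ¬ Dominates (pathGraph k) (B5 k ∪ B6 k) := by
  refine not_dom_of _ 0 (by omega) ?_ ?_
  · simp only [Set.mem_union, B5, B6, Set.mem_setOf_eq, Fin.val_mk]; omega
  · intro u hu; simp only [Set.mem_union, B5, B6, Set.mem_setOf_eq] at hu; omega

lemma coalition_symm {V : Type*} {G : SimpleGraph V} {A B : Set V}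
    (h : Coalition G A B) : Coalition G B A := by
  obtain ⟨d, na, nb, u⟩ := h
  exact ⟨d.symm, nb, na, by rwa [Set.union_comm]⟩

lemma not_co_of {V : Type*} {G : SimpleGraph V} {A B : Set V}
    (h : ¬ Dominates G (A ∪ B)) : ¬ Coalition G A B := fun hc => h hc.2.2.2

lemma not_co_self {V : Type*} {G : SimpleGraph V} {A : Set V}
    (h : ¬ Dominates G A) : ¬ Coalition G A A := fun hc => h (by
  have := hc.2.2.2; rwa [Set.union_self] at this)

lemma disj12 : Disjoint (B1 k) (B2 k) := by
  rw [Set.disjoint_left]; intro a ha hb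
  simp only [B1, B2, Set.mem_setOf_eq] at ha hb; omega

lemma disj13 : Disjoint (B1 k) (B3 k) := by
  rw [Set.disjoint_left]; intro a ha hb
  simp only [B1, B3, Set.mem_setOf_eq] at ha hb; omega

lemma disj14 : Disjoint (B1 k) (B4 k) := by
  rw [Set.disjoint_left]; intro a ha hb
  simp only [B1, B4, Set.mem_setOf_eq] at ha hb; omega

lemma disj25 : Disjoint (B2 k) (B5 k) := by
  rw [Set.disjoint_left]; intro a ha hb
  simp only [B2, B5, Set.mem_setOf_eq] at ha hb; omega

lemma disj26 : Disjoint (B2 k) (B6 k) := by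
  rw [Set.disjoint_left]; intro a ha hb
  simp only [B2, B6, Set.mem_setOf_eq] at ha hb; omega

lemma co12 (hk : 10 ≤ k) : Coalition (pathGraph k) (B1 k) (B2 k) :=
  ⟨disj12, ndom_1 hk, ndom_2 hk, dom_12 hk⟩
lemma co13 (hk : 10 ≤ k) : Coalition (pathGraph k) (B1 k) (B3 k) :=
  ⟨disj13, ndom_1 hk, ndom_3 hk, dom_13 hk⟩
lemma co14 (hk : 10 ≤ k) : Coalition (pathGraph k) (B1 k) (B4 k) :=
  ⟨disj14, ndom_1 hk, ndom_4 hk, dom_14 hk⟩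
lemma co25 (hk : 10 ≤ k) : Coalition (pathGraph k) (B2 k) (B5 k) :=
  ⟨disj25, ndom_2 hk, ndom_5 hk, dom_25 hk⟩
lemma co26 (hk : 10 ≤ k) : Coalition (pathGraph k) (B2 k) (B6 k) :=
  ⟨disj26, ndom_2 hk, ndom_6 hk, dom_26 hk⟩

lemma ne_sets {V : Type*} {A B : Set V} (x : V) (h1 : x ∈ A) (h2 : x ∉ B) : A ≠ B :=
  fun h => h2 (h ▸ h1)

lemma ne12 (hk : 10 ≤ k) : B1 k ≠ B2 k :=
  ne_sets (⟨0, by omega⟩ : Fin k) (Or.inl rfl)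
    (by simp only [B2, Set.mem_setOf_eq, Fin.val_mk]; omega)
lemma ne13 (hk : 10 ≤ k) : B1 k ≠ B3 k :=
  ne_sets (⟨0, by omega⟩ : Fin k) (Or.inl rfl)
    (by simp only [B3, Set.mem_setOf_eq, Fin.val_mk]; omega)
lemma ne14 (hk : 10 ≤ k) : B1 k ≠ B4 k :=
  ne_sets (⟨0, by omega⟩ : Fin k) (Or.inl rfl)
    (by simp only [B4, Set.mem_setOf_eq, Fin.val_mk]; omega)
lemma ne15 (hk : 10 ≤ k) : B1 k ≠ B5 k :=
  ne_sets (⟨0, by omega⟩ : Fin k) (Or.inl rfl)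
    (by simp only [B5, Set.mem_setOf_eq, Fin.val_mk]; omega)
lemma ne16 (hk : 10 ≤ k) : B1 k ≠ B6 k :=
  ne_sets (⟨0, by omega⟩ : Fin k) (Or.inl rfl)
    (by simp only [B6, Set.mem_setOf_eq, Fin.val_mk]; omega)
lemma ne23 (hk : 10 ≤ k) : B2 k ≠ B3 k :=
  ne_sets (⟨1, by omega⟩ : Fin k) (Or.inl rfl)
    (by simp only [B3, Set.mem_setOf_eq, Fin.val_mk]; omega)
lemma ne24 (hk : 10 ≤ k) : B2 k ≠ B4 k :=
  ne_sets (⟨1, by omega⟩ : Fin k) (Or.inl rfl)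
    (by simp only [B4, Set.mem_setOf_eq, Fin.val_mk]; omega)
lemma ne25 (hk : 10 ≤ k) : B2 k ≠ B5 k :=
  ne_sets (⟨1, by omega⟩ : Fin k) (Or.inl rfl)
    (by simp only [B5, Set.mem_setOf_eq, Fin.val_mk]; omega)
lemma ne26 (hk : 10 ≤ k) : B2 k ≠ B6 k :=
  ne_sets (⟨1, by omega⟩ : Fin k) (Or.inl rfl)
    (by simp only [B6, Set.mem_setOf_eq, Fin.val_mk]; omega)
lemma ne34 (hk : 10 ≤ k) : B3 k ≠ B4 k :=
  ne_sets (⟨2, by omega⟩ : Fin k) rfl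
    (by simp only [B4, Set.mem_setOf_eq, Fin.val_mk]; omega)
lemma ne35 (hk : 10 ≤ k) : B3 k ≠ B5 k :=
  ne_sets (⟨2, by omega⟩ : Fin k) rfl
    (by simp only [B5, Set.mem_setOf_eq, Fin.val_mk]; omega)
lemma ne36 (hk : 10 ≤ k) : B3 k ≠ B6 k :=
  ne_sets (⟨2, by omega⟩ : Fin k) rfl
    (by simp only [B6, Set.mem_setOf_eq, Fin.val_mk]; omega)
lemma ne45 (hk : 10 ≤ k) : B4 k ≠ B5 k :=
  ne_sets (⟨3, by omega⟩ : Fin k) rfl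
    (by simp only [B5, Set.mem_setOf_eq, Fin.val_mk]; omega)
lemma ne46 (hk : 10 ≤ k) : B4 k ≠ B6 k :=
  ne_sets (⟨3, by omega⟩ : Fin k) rfl
    (by simp only [B6, Set.mem_setOf_eq, Fin.val_mk]; omega)
lemma ne56 (hk : 10 ≤ k) : B5 k ≠ B6 k :=
  ne_sets (⟨6, by omega⟩ : Fin k) rfl
    (by simp only [B6, Set.mem_setOf_eq, Fin.val_mk]; omega)

lemma mem_PK_iff {A : Set (Fin k)} :
    A ∈ PK k ↔ A = B1 k ∨ A = B2 k ∨ A = B3 k ∨ A = B4 k ∨ A = B5 k ∨ A = B6 k := by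
  simp [PK, Finset.mem_insert, Finset.mem_singleton]

lemma memP1 : B1 k ∈ PK k := mem_PK_iff.mpr (Or.inl rfl)
lemma memP2 : B2 k ∈ PK k := mem_PK_iff.mpr (Or.inr (Or.inl rfl))
lemma memP3 : B3 k ∈ PK k := mem_PK_iff.mpr (Or.inr (Or.inr (Or.inl rfl)))
lemma memP4 : B4 k ∈ PK k := mem_PK_iff.mpr (Or.inr (Or.inr (Or.inr (Or.inl rfl))))
lemma memP5 : B5 k ∈ PK k := mem_PK_iff.mpr (Or.inr (Or.inr (Or.inr (Or.inr (Or.inl rfl)))))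
lemma memP6 : B6 k ∈ PK k := mem_PK_iff.mpr (Or.inr (Or.inr (Or.inr (Or.inr (Or.inr rfl)))))

lemma card_PK (hk : 10 ≤ k) : (PK k).card = 6 := by
  rw [PK]
  rw [Finset.card_insert_of_notMem (by
    simp only [Finset.mem_insert, Finset.mem_singleton]
    push_neg
    exact ⟨ne12 hk, ne13 hk, ne14 hk, ne15 hk, ne16 hk⟩)]
  rw [Finset.card_insert_of_notMem (by
    simp only [Finset.mem_insert, Finset.mem_singleton]
    push_neg
    exact ⟨ne23 hk, ne24 hk, ne25 hk, ne26 hk⟩)]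
  rw [Finset.card_insert_of_notMem (by
    simp only [Finset.mem_insert, Finset.mem_singleton]
    push_neg
    exact ⟨ne34 hk, ne35 hk, ne36 hk⟩)]
  rw [Finset.card_insert_of_notMem (by
    simp only [Finset.mem_insert, Finset.mem_singleton]
    push_neg
    exact ⟨ne45 hk, ne46 hk⟩)]
  rw [Finset.card_insert_of_notMem (by
    simp only [Finset.mem_singleton]
    exact ne56 hk)]
  rw [Finset.card_singleton]

lemma isPartition (hk : 10 ≤ k) : IsCoalitionPartition (pathGraph k) (PK k) := by
  refine ⟨?_, ?_, ?_, ?_⟩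
  · -- nonempty
    intro A hA
    rcases mem_PK_iff.mp hA with rfl | rfl | rfl | rfl | rfl | rfl
    · exact ⟨⟨0, by omega⟩, Or.inl rfl⟩
    · exact ⟨⟨1, by omega⟩, Or.inl rfl⟩
    · exact ⟨⟨2, by omega⟩, rfl⟩
    · exact ⟨⟨3, by omega⟩, rfl⟩
    · exact ⟨⟨6, by omega⟩, rfl⟩
    · exact ⟨⟨7, by omega⟩, rfl⟩
  · -- pairwise disjoint
    intro A hA B hB hne
    rcases mem_PK_iff.mp hA with rfl | rfl | rfl | rfl | rfl | rfl <;>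
      rcases mem_PK_iff.mp hB with rfl | rfl | rfl | rfl | rfl | rfl <;>
      first
        | exact absurd rfl hne
        | (rw [Set.disjoint_left]; intro a ha hb;
           simp only [B1, B2, B3, B4, B5, B6, Set.mem_setOf_eq] at ha hb; omega)
  · -- covering
    intro v
    have hc : v ∈ B1 k ∨ v ∈ B2 k ∨ v ∈ B3 k ∨ v ∈ B4 k ∨ v ∈ B5 k ∨ v ∈ B6 k := by
      simp only [B1, B2, B3, B4, B5, B6, Set.mem_setOf_eq]
      omega
    rcases hc with h | h | h | h | h | h
    · exact ⟨B1 k, memP1, h⟩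
    · exact ⟨B2 k, memP2, h⟩
    · exact ⟨B3 k, memP3, h⟩
    · exact ⟨B4 k, memP4, h⟩
    · exact ⟨B5 k, memP5, h⟩
    · exact ⟨B6 k, memP6, h⟩
  · -- each part is in a coalition
    intro A hA
    rcases mem_PK_iff.mp hA with rfl | rfl | rfl | rfl | rfl | rfl
    · exact Or.inr ⟨ndom_1 hk, B2 k, memP2, (ne12 hk).symm, co12 hk⟩
    · exact Or.inr ⟨ndom_2 hk, B1 k, memP1, ne12 hk, coalition_symm (co12 hk)⟩
    · exact Or.inr ⟨ndom_3 hk, B1 k, memP1, ne13 hk, coalition_symm (co13 hk)⟩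
    · exact Or.inr ⟨ndom_4 hk, B1 k, memP1, ne14 hk, coalition_symm (co14 hk)⟩
    · exact Or.inr ⟨ndom_5 hk, B2 k, memP2, ne25 hk, coalition_symm (co25 hk)⟩
    · exact Or.inr ⟨ndom_6 hk, B2 k, memP2, ne26 hk, coalition_symm (co26 hk)⟩

/-- The map sending the vertices of the double star to the six parts. -/
def emb (k : ℕ) : Fin 6 → {A : Set (Fin k) // A ∈ PK k}
  | ⟨0, _⟩ => ⟨B1 k, memP1⟩
  | ⟨1, _⟩ => ⟨B2 k, memP2⟩
  | ⟨2, _⟩ => ⟨B3 k, memP3⟩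
  | ⟨3, _⟩ => ⟨B4 k, memP4⟩
  | ⟨4, _⟩ => ⟨B5 k, memP5⟩
  | ⟨5, _⟩ => ⟨B6 k, memP6⟩

lemma emb_bij (hk : 10 ≤ k) : Function.Bijective (emb k) := by
  constructor
  · intro i j hij
    have h := congrArg Subtype.val hij
    fin_cases i <;> fin_cases j <;>
      first
        | rfl
        | (exfalso; revert h; simp only [emb]
           first
             | exact fun h => (ne12 hk) h
             | exact fun h => (ne13 hk) h
             | exact fun h => (ne14 hk) h
             | exact fun h => (ne15 hk) h
             | exact fun h => (ne16 hk) h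
             | exact fun h => (ne23 hk) h
             | exact fun h => (ne24 hk) h
             | exact fun h => (ne25 hk) h
             | exact fun h => (ne26 hk) h
             | exact fun h => (ne34 hk) h
             | exact fun h => (ne35 hk) h
             | exact fun h => (ne36 hk) h
             | exact fun h => (ne45 hk) h
             | exact fun h => (ne46 hk) h
             | exact fun h => (ne56 hk) h
             | exact fun h => (ne12 hk) h.symm
             | exact fun h => (ne13 hk) h.symm
             | exact fun h => (ne14 hk) h.symm
             | exact fun h => (ne15 hk) h.symm
             | exact fun h => (ne16 hk) h.symm
             | exact fun h => (ne23 hk) h.symm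
             | exact fun h => (ne24 hk) h.symm
             | exact fun h => (ne25 hk) h.symm
             | exact fun h => (ne26 hk) h.symm
             | exact fun h => (ne34 hk) h.symm
             | exact fun h => (ne35 hk) h.symm
             | exact fun h => (ne36 hk) h.symm
             | exact fun h => (ne45 hk) h.symm
             | exact fun h => (ne46 hk) h.symm
             | exact fun h => (ne56 hk) h.symm)
  · rintro ⟨A, hA⟩
    rcases mem_PK_iff.mp hA with rfl | rfl | rfl | rfl | rfl | rfl
    · exact ⟨0, rfl⟩
    · exact ⟨1, rfl⟩
    · exact ⟨2, rfl⟩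
    · exact ⟨3, rfl⟩
    · exact ⟨4, rfl⟩
    · exact ⟨5, rfl⟩

lemma ds_adj_iff (i j : Fin 6) : doubleStar22.Adj i j ↔
    (s(i, j) = s(0, 1) ∨ s(i, j) = s(0, 2) ∨ s(i, j) = s(0, 3) ∨
      s(i, j) = s(1, 4) ∨ s(i, j) = s(1, 5)) ∧ i ≠ j := by
  rw [doubleStar22, SimpleGraph.fromEdgeSet_adj]
  simp [Set.mem_insert_iff, Set.mem_singleton_iff]

/-- The isomorphism from the double star to the coalition graph. -/
noncomputable def dsIso (hk : 10 ≤ k) :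
    doubleStar22 ≃g coalitionGraph (pathGraph k) (PK k) where
  toEquiv := Equiv.ofBijective (emb k) (emb_bij hk)
  map_rel_iff' := by
    intro i j
    show Coalition (pathGraph k) (emb k i).1 (emb k j).1 ↔ doubleStar22.Adj i j
    fin_cases i <;> fin_cases j <;> simp only [emb] <;>
      first
        | exact iff_of_false (not_co_self (ndom_1 hk))
            (by simp [ds_adj_iff, Sym2.eq_iff])
        | exact iff_of_false (not_co_self (ndom_2 hk))
            (by simp [ds_adj_iff, Sym2.eq_iff])
        | exact iff_of_false (not_co_self (ndom_3 hk))
            (by simp [ds_adj_iff, Sym2.eq_iff])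
        | exact iff_of_false (not_co_self (ndom_4 hk))
            (by simp [ds_adj_iff, Sym2.eq_iff])
        | exact iff_of_false (not_co_self (ndom_5 hk))
            (by simp [ds_adj_iff, Sym2.eq_iff])
        | exact iff_of_false (not_co_self (ndom_6 hk))
            (by simp [ds_adj_iff, Sym2.eq_iff])
        | exact iff_of_true (co12 hk) (by simp [ds_adj_iff, Sym2.eq_iff])
        | exact iff_of_true (co13 hk) (by simp [ds_adj_iff, Sym2.eq_iff])
        | exact iff_of_true (co14 hk) (by simp [ds_adj_iff, Sym2.eq_iff])
        | exact iff_of_true (co25 hk) (by simp [ds_adj_iff, Sym2.eq_iff])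
        | exact iff_of_true (co26 hk) (by simp [ds_adj_iff, Sym2.eq_iff])
        | exact iff_of_true (coalition_symm (co12 hk)) (by simp [ds_adj_iff, Sym2.eq_iff])
        | exact iff_of_true (coalition_symm (co13 hk)) (by simp [ds_adj_iff, Sym2.eq_iff])
        | exact iff_of_true (coalition_symm (co14 hk)) (by simp [ds_adj_iff, Sym2.eq_iff])
        | exact iff_of_true (coalition_symm (co25 hk)) (by simp [ds_adj_iff, Sym2.eq_iff])
        | exact iff_of_true (coalition_symm (co26 hk)) (by simp [ds_adj_iff, Sym2.eq_iff])
        | exact iff_of_false (not_co_of (ndom_15 hk)) (by simp [ds_adj_iff, Sym2.eq_iff])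
        | exact iff_of_false (not_co_of (ndom_16 hk)) (by simp [ds_adj_iff, Sym2.eq_iff])
        | exact iff_of_false (not_co_of (ndom_23 hk)) (by simp [ds_adj_iff, Sym2.eq_iff])
        | exact iff_of_false (not_co_of (ndom_24 hk)) (by simp [ds_adj_iff, Sym2.eq_iff])
        | exact iff_of_false (not_co_of (ndom_34 hk)) (by simp [ds_adj_iff, Sym2.eq_iff])
        | exact iff_of_false (not_co_of (ndom_35 hk)) (by simp [ds_adj_iff, Sym2.eq_iff])
        | exact iff_of_false (not_co_of (ndom_36 hk)) (by simp [ds_adj_iff, Sym2.eq_iff])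
        | exact iff_of_false (not_co_of (ndom_45 hk)) (by simp [ds_adj_iff, Sym2.eq_iff])
        | exact iff_of_false (not_co_of (ndom_46 hk)) (by simp [ds_adj_iff, Sym2.eq_iff])
        | exact iff_of_false (not_co_of (ndom_56 hk)) (by simp [ds_adj_iff, Sym2.eq_iff])
        | exact iff_of_false (fun hc => not_co_of (ndom_15 hk) (coalition_symm hc))
            (by simp [ds_adj_iff, Sym2.eq_iff])
        | exact iff_of_false (fun hc => not_co_of (ndom_16 hk) (coalition_symm hc))
            (by simp [ds_adj_iff, Sym2.eq_iff])
        | exact iff_of_false (fun hc => not_co_of (ndom_23 hk) (coalition_symm hc))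
            (by simp [ds_adj_iff, Sym2.eq_iff])
        | exact iff_of_false (fun hc => not_co_of (ndom_24 hk) (coalition_symm hc))
            (by simp [ds_adj_iff, Sym2.eq_iff])
        | exact iff_of_false (fun hc => not_co_of (ndom_34 hk) (coalition_symm hc))
            (by simp [ds_adj_iff, Sym2.eq_iff])
        | exact iff_of_false (fun hc => not_co_of (ndom_35 hk) (coalition_symm hc))
            (by simp [ds_adj_iff, Sym2.eq_iff])
        | exact iff_of_false (fun hc => not_co_of (ndom_36 hk) (coalition_symm hc))
            (by simp [ds_adj_iff, Sym2.eq_iff])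
        | exact iff_of_false (fun hc => not_co_of (ndom_45 hk) (coalition_symm hc))
            (by simp [ds_adj_iff, Sym2.eq_iff])
        | exact iff_of_false (fun hc => not_co_of (ndom_46 hk) (coalition_symm hc))
            (by simp [ds_adj_iff, Sym2.eq_iff])
        | exact iff_of_false (fun hc => not_co_of (ndom_56 hk) (coalition_symm hc))
            (by simp [ds_adj_iff, Sym2.eq_iff])

end Stmt17Aux


theorem stmt17 (k : ℕ) (hk : 10 ≤ k) :
    ∃ P : Finset (Set (Fin k)),
      IsCoalitionPartition (SimpleGraph.pathGraph k) P ∧ P.card = 6 ∧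
      Nonempty ((coalitionGraph (SimpleGraph.pathGraph k) P) ≃g doubleStar22) := by
  exact ⟨Stmt17Aux.PK k, Stmt17Aux.isPartition hk, Stmt17Aux.card_PK hk,
    ⟨(Stmt17Aux.dsIso hk).symm⟩⟩
end

section
/- For every integer k ≥ 7, there exists a coalition partition Ψ of the path P_k with five parts such that the coalition graph CG(P_k, Ψ) is isomorphic to the path P_5. -/
open SimpleGraph

attribute [local instance] Classical.propDecidable

/- Auxiliary material -/

def Bset (k : ℕ) (q : ℕ → Prop) : Set (Fin k) := {v | q v.val}

lemma Bset_union (k : ℕ) (q r : ℕ → Prop) :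
    Bset k q ∪ Bset k r = Bset k (fun m => q m ∨ r m) := rfl

lemma dom_Bset (k : ℕ) (q : ℕ → Prop)
    (h : ∀ m, m < k → ¬ q m → (1 ≤ m ∧ q (m-1)) ∨ (m+1 < k ∧ q (m+1))) :
    Dominates (SimpleGraph.pathGraph k) (Bset k q) := by
  intro v hv
  rcases h v.val v.isLt hv with ⟨h1, h2⟩ | ⟨h1, h2⟩
  · refine ⟨⟨v.val - 1, by omega⟩, h2, ?_⟩
    rw [SimpleGraph.pathGraph_adj]
    left; simp; omega
  · refine ⟨⟨v.val + 1, h1⟩, h2, ?_⟩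
    rw [SimpleGraph.pathGraph_adj]
    right; simp

lemma notdom_Bset (k : ℕ) (q : ℕ → Prop) (w : ℕ) (hw : w < k) (h1 : ¬ q w)
    (h2 : ∀ m, q m → ¬ (m + 1 = w ∨ w + 1 = m)) :
    ¬ Dominates (SimpleGraph.pathGraph k) (Bset k q) := by
  intro hd
  obtain ⟨u, hu, hadj⟩ := hd ⟨w, hw⟩ h1
  rw [SimpleGraph.pathGraph_adj] at hadj
  exact h2 u.val hu (by simpa using hadj)

lemma ne_Bset (k : ℕ) (q r : ℕ → Prop) (w : ℕ) (hw : w < k) (h1 : q w) (h2 : ¬ r w) :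
    Bset k q ≠ Bset k r := by
  intro h
  apply h2
  have hm : (⟨w, hw⟩ : Fin k) ∈ Bset k q := h1
  rw [h] at hm
  exact hm

lemma disj_Bset (k : ℕ) (q r : ℕ → Prop) (h : ∀ m, q m → r m → False) :
    Disjoint (Bset k q) (Bset k r) :=
  Set.disjoint_left.mpr fun {a} ha hb => h a.val ha hb

lemma not_coalition_self {V : Type*} (G : SimpleGraph V) (S : Set V) :
    ¬ Coalition G S S := fun hc => hc.2.1 (Set.union_self S ▸ hc.2.2.2)

lemma not_coalition_of {V : Type*} (G : SimpleGraph V) (S T : Set V)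
    (h : ¬ Dominates G (S ∪ T)) : ¬ Coalition G S T := fun hc => h hc.2.2.2

lemma not_coalition_of' {V : Type*} (G : SimpleGraph V) (S T : Set V)
    (h : ¬ Dominates G (S ∪ T)) : ¬ Coalition G T S :=
  fun hc => h (Set.union_comm T S ▸ hc.2.2.2)

def cq1 : ℕ → Prop := fun m => m = 2
def cq2 : ℕ → Prop := fun m => m = 0 ∨ (5 ≤ m ∧ m % 2 = 1)
def cq3 : ℕ → Prop := fun m => m = 3
def cq4 : ℕ → Prop := fun m => m = 1 ∨ (6 ≤ m ∧ m % 2 = 0)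
def cq5 : ℕ → Prop := fun m => m = 4

set_option maxHeartbeats 2000000 in
theorem stmt19 (k : ℕ) (hk : 7 ≤ k) :
    ∃ P : Finset (Set (Fin k)),
      IsCoalitionPartition (SimpleGraph.pathGraph k) P ∧ P.card = 5 ∧
      Nonempty ((coalitionGraph (SimpleGraph.pathGraph k) P) ≃g
        SimpleGraph.pathGraph 5) := by
  -- single sets do not dominate
  have nd1 : ¬ Dominates (SimpleGraph.pathGraph k) (Bset k cq1) :=
    notdom_Bset k cq1 5 (by omega) (by simp only [cq1]; omega)
      (by intro m hm; simp only [cq1] at hm; omega)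
  have nd2 : ¬ Dominates (SimpleGraph.pathGraph k) (Bset k cq2) :=
    notdom_Bset k cq2 2 (by omega) (by simp only [cq2]; omega)
      (by intro m hm; simp only [cq2] at hm; omega)
  have nd3 : ¬ Dominates (SimpleGraph.pathGraph k) (Bset k cq3) :=
    notdom_Bset k cq3 0 (by omega) (by simp only [cq3]; omega)
      (by intro m hm; simp only [cq3] at hm; omega)
  have nd4 : ¬ Dominates (SimpleGraph.pathGraph k) (Bset k cq4) :=
    notdom_Bset k cq4 3 (by omega) (by simp only [cq4]; omega)
      (by intro m hm; simp only [cq4] at hm; omega)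
  have nd5 : ¬ Dominates (SimpleGraph.pathGraph k) (Bset k cq5) :=
    notdom_Bset k cq5 0 (by omega) (by simp only [cq5]; omega)
      (by intro m hm; simp only [cq5] at hm; omega)
  -- non-dominating unions
  have nd13 : ¬ Dominates (SimpleGraph.pathGraph k) (Bset k cq1 ∪ Bset k cq3) := by
    rw [Bset_union]
    exact notdom_Bset k _ 0 (by omega) (by simp only [cq1, cq3]; omega)
      (by intro m hm; simp only [cq1, cq3] at hm; omega)
  have nd14 : ¬ Dominates (SimpleGraph.pathGraph k) (Bset k cq1 ∪ Bset k cq4) := by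
    rw [Bset_union]
    exact notdom_Bset k _ 4 (by omega) (by simp only [cq1, cq4]; omega)
      (by intro m hm; simp only [cq1, cq4] at hm; omega)
  have nd15 : ¬ Dominates (SimpleGraph.pathGraph k) (Bset k cq1 ∪ Bset k cq5) := by
    rw [Bset_union]
    exact notdom_Bset k _ 0 (by omega) (by simp only [cq1, cq5]; omega)
      (by intro m hm; simp only [cq1, cq5] at hm; omega)
  have nd24 : ¬ Dominates (SimpleGraph.pathGraph k) (Bset k cq2 ∪ Bset k cq4) := by
    rw [Bset_union]
    exact notdom_Bset k _ 3 (by omega) (by simp only [cq2, cq4]; omega)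
      (by intro m hm; simp only [cq2, cq4] at hm; omega)
  have nd25 : ¬ Dominates (SimpleGraph.pathGraph k) (Bset k cq2 ∪ Bset k cq5) := by
    rw [Bset_union]
    exact notdom_Bset k _ 2 (by omega) (by simp only [cq2, cq5]; omega)
      (by intro m hm; simp only [cq2, cq5] at hm; omega)
  have nd35 : ¬ Dominates (SimpleGraph.pathGraph k) (Bset k cq3 ∪ Bset k cq5) := by
    rw [Bset_union]
    exact notdom_Bset k _ 0 (by omega) (by simp only [cq3, cq5]; omega)
      (by intro m hm; simp only [cq3, cq5] at hm; omega)
  -- dominating unions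
  have d12 : Dominates (SimpleGraph.pathGraph k) (Bset k cq1 ∪ Bset k cq2) := by
    rw [Bset_union]
    exact dom_Bset k _ (by intro m hm hq; simp only [cq1, cq2] at hq ⊢; omega)
  have d23 : Dominates (SimpleGraph.pathGraph k) (Bset k cq2 ∪ Bset k cq3) := by
    rw [Bset_union]
    exact dom_Bset k _ (by intro m hm hq; simp only [cq2, cq3] at hq ⊢; omega)
  have d34 : Dominates (SimpleGraph.pathGraph k) (Bset k cq3 ∪ Bset k cq4) := by
    rw [Bset_union]
    exact dom_Bset k _ (by intro m hm hq; simp only [cq3, cq4] at hq ⊢; omega)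
  have d45 : Dominates (SimpleGraph.pathGraph k) (Bset k cq4 ∪ Bset k cq5) := by
    rw [Bset_union]
    exact dom_Bset k _ (by intro m hm hq; simp only [cq4, cq5] at hq ⊢; omega)
  -- distinctness
  have ne12 : Bset k cq1 ≠ Bset k cq2 :=
    ne_Bset k cq1 cq2 2 (by omega) rfl (by simp only [cq2]; omega)
  have ne13 : Bset k cq1 ≠ Bset k cq3 :=
    ne_Bset k cq1 cq3 2 (by omega) rfl (by simp only [cq3]; omega)
  have ne14 : Bset k cq1 ≠ Bset k cq4 :=
    ne_Bset k cq1 cq4 2 (by omega) rfl (by simp only [cq4]; omega)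
  have ne15 : Bset k cq1 ≠ Bset k cq5 :=
    ne_Bset k cq1 cq5 2 (by omega) rfl (by simp only [cq5]; omega)
  have ne23 : Bset k cq2 ≠ Bset k cq3 :=
    ne_Bset k cq2 cq3 0 (by omega) (Or.inl rfl) (by simp only [cq3]; omega)
  have ne24 : Bset k cq2 ≠ Bset k cq4 :=
    ne_Bset k cq2 cq4 0 (by omega) (Or.inl rfl) (by simp only [cq4]; omega)
  have ne25 : Bset k cq2 ≠ Bset k cq5 :=
    ne_Bset k cq2 cq5 0 (by omega) (Or.inl rfl) (by simp only [cq5]; omega)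
  have ne34 : Bset k cq3 ≠ Bset k cq4 :=
    ne_Bset k cq3 cq4 3 (by omega) rfl (by simp only [cq4]; omega)
  have ne35 : Bset k cq3 ≠ Bset k cq5 :=
    ne_Bset k cq3 cq5 3 (by omega) rfl (by simp only [cq5]; omega)
  have ne45 : Bset k cq4 ≠ Bset k cq5 :=
    ne_Bset k cq4 cq5 1 (by omega) (Or.inl rfl) (by simp only [cq5]; omega)
  -- disjointness
  have dj12 : Disjoint (Bset k cq1) (Bset k cq2) :=
    disj_Bset k _ _ (by intro m h h'; simp only [cq1, cq2] at h h'; omega)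
  have dj13 : Disjoint (Bset k cq1) (Bset k cq3) :=
    disj_Bset k _ _ (by intro m h h'; simp only [cq1, cq3] at h h'; omega)
  have dj14 : Disjoint (Bset k cq1) (Bset k cq4) :=
    disj_Bset k _ _ (by intro m h h'; simp only [cq1, cq4] at h h'; omega)
  have dj15 : Disjoint (Bset k cq1) (Bset k cq5) :=
    disj_Bset k _ _ (by intro m h h'; simp only [cq1, cq5] at h h'; omega)
  have dj23 : Disjoint (Bset k cq2) (Bset k cq3) :=
    disj_Bset k _ _ (by intro m h h'; simp only [cq2, cq3] at h h'; omega)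
  have dj24 : Disjoint (Bset k cq2) (Bset k cq4) :=
    disj_Bset k _ _ (by intro m h h'; simp only [cq2, cq4] at h h'; omega)
  have dj25 : Disjoint (Bset k cq2) (Bset k cq5) :=
    disj_Bset k _ _ (by intro m h h'; simp only [cq2, cq5] at h h'; omega)
  have dj34 : Disjoint (Bset k cq3) (Bset k cq4) :=
    disj_Bset k _ _ (by intro m h h'; simp only [cq3, cq4] at h h'; omega)
  have dj35 : Disjoint (Bset k cq3) (Bset k cq5) :=
    disj_Bset k _ _ (by intro m h h'; simp only [cq3, cq5] at h h'; omega)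
  have dj45 : Disjoint (Bset k cq4) (Bset k cq5) :=
    disj_Bset k _ _ (by intro m h h'; simp only [cq4, cq5] at h h'; omega)
  -- coalitions
  have c12 : Coalition (SimpleGraph.pathGraph k) (Bset k cq1) (Bset k cq2) :=
    ⟨dj12, nd1, nd2, d12⟩
  have c21 : Coalition (SimpleGraph.pathGraph k) (Bset k cq2) (Bset k cq1) :=
    ⟨dj12.symm, nd2, nd1, by rw [Set.union_comm]; exact d12⟩
  have c23 : Coalition (SimpleGraph.pathGraph k) (Bset k cq2) (Bset k cq3) :=
    ⟨dj23, nd2, nd3, d23⟩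
  have c32 : Coalition (SimpleGraph.pathGraph k) (Bset k cq3) (Bset k cq2) :=
    ⟨dj23.symm, nd3, nd2, by rw [Set.union_comm]; exact d23⟩
  have c34 : Coalition (SimpleGraph.pathGraph k) (Bset k cq3) (Bset k cq4) :=
    ⟨dj34, nd3, nd4, d34⟩
  have c43 : Coalition (SimpleGraph.pathGraph k) (Bset k cq4) (Bset k cq3) :=
    ⟨dj34.symm, nd4, nd3, by rw [Set.union_comm]; exact d34⟩
  have c45 : Coalition (SimpleGraph.pathGraph k) (Bset k cq4) (Bset k cq5) :=
    ⟨dj45, nd4, nd5, d45⟩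
  have c54 : Coalition (SimpleGraph.pathGraph k) (Bset k cq5) (Bset k cq4) :=
    ⟨dj45.symm, nd5, nd4, by rw [Set.union_comm]; exact d45⟩
  refine ⟨{Bset k cq1, Bset k cq2, Bset k cq3, Bset k cq4, Bset k cq5},
    ⟨?_, ?_, ?_, ?_⟩, ?_, ?_⟩
  · -- nonempty
    intro A hA
    simp only [Finset.mem_insert, Finset.mem_singleton] at hA
    rcases hA with rfl | rfl | rfl | rfl | rfl
    · exact ⟨⟨2, by omega⟩, rfl⟩
    · exact ⟨⟨0, by omega⟩, Or.inl rfl⟩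
    · exact ⟨⟨3, by omega⟩, rfl⟩
    · exact ⟨⟨1, by omega⟩, Or.inl rfl⟩
    · exact ⟨⟨4, by omega⟩, rfl⟩
  · -- pairwise disjoint
    intro A hA B hB hAB
    simp only [Finset.mem_insert, Finset.mem_singleton] at hA hB
    rcases hA with rfl | rfl | rfl | rfl | rfl <;>
      rcases hB with rfl | rfl | rfl | rfl | rfl <;>
      first
        | exact absurd rfl hAB
        | exact dj12 | exact dj12.symm
        | exact dj13 | exact dj13.symm
        | exact dj14 | exact dj14.symm
        | exact dj15 | exact dj15.symm
        | exact dj23 | exact dj23.symm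
        | exact dj24 | exact dj24.symm
        | exact dj25 | exact dj25.symm
        | exact dj34 | exact dj34.symm
        | exact dj35 | exact dj35.symm
        | exact dj45 | exact dj45.symm
  · -- cover
    intro v
    have hv := v.isLt
    by_cases h1 : cq1 v.val
    · exact ⟨Bset k cq1, by simp, h1⟩
    by_cases h2 : cq2 v.val
    · exact ⟨Bset k cq2, by simp, h2⟩
    by_cases h3 : cq3 v.val
    · exact ⟨Bset k cq3, by simp, h3⟩
    by_cases h4 : cq4 v.val
    · exact ⟨Bset k cq4, by simp, h4⟩
    refine ⟨Bset k cq5, by simp, ?_⟩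
    show cq5 v.val
    simp only [cq1, cq2, cq3, cq4] at h1 h2 h3 h4
    simp only [cq5]
    omega
  · -- each set is in a coalition
    intro A hA
    simp only [Finset.mem_insert, Finset.mem_singleton] at hA
    rcases hA with rfl | rfl | rfl | rfl | rfl
    · exact Or.inr ⟨nd1, Bset k cq2, by simp, ne12.symm, c12⟩
    · exact Or.inr ⟨nd2, Bset k cq1, by simp, ne12, c21⟩
    · exact Or.inr ⟨nd3, Bset k cq2, by simp, ne23, c32⟩
    · exact Or.inr ⟨nd4, Bset k cq3, by simp, ne34, c43⟩
    · exact Or.inr ⟨nd5, Bset k cq4, by simp, ne45, c54⟩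
  · -- cardinality
    rw [Finset.card_insert_of_notMem (by simp [ne12, ne13, ne14, ne15]),
      Finset.card_insert_of_notMem (by simp [ne23, ne24, ne25]),
      Finset.card_insert_of_notMem (by simp [ne34, ne35]),
      Finset.card_insert_of_notMem (by simp [ne45]),
      Finset.card_singleton]
  · -- isomorphism with P5
    refine ⟨RelIso.symm ⟨Equiv.ofBijective
      ![⟨Bset k cq1, by simp⟩, ⟨Bset k cq2, by simp⟩, ⟨Bset k cq3, by simp⟩,
        ⟨Bset k cq4, by simp⟩, ⟨Bset k cq5, by simp⟩] ⟨?_, ?_⟩, ?_⟩⟩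
    · intro i j h
      fin_cases i <;> fin_cases j <;>
        first
          | rfl
          | exact absurd (congrArg Subtype.val h) ne12
          | exact absurd (congrArg Subtype.val h) ne12.symm
          | exact absurd (congrArg Subtype.val h) ne13
          | exact absurd (congrArg Subtype.val h) ne13.symm
          | exact absurd (congrArg Subtype.val h) ne14
          | exact absurd (congrArg Subtype.val h) ne14.symm
          | exact absurd (congrArg Subtype.val h) ne15
          | exact absurd (congrArg Subtype.val h) ne15.symm
          | exact absurd (congrArg Subtype.val h) ne23
          | exact absurd (congrArg Subtype.val h) ne23.symm
          | exact absurd (congrArg Subtype.val h) ne24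
          | exact absurd (congrArg Subtype.val h) ne24.symm
          | exact absurd (congrArg Subtype.val h) ne25
          | exact absurd (congrArg Subtype.val h) ne25.symm
          | exact absurd (congrArg Subtype.val h) ne34
          | exact absurd (congrArg Subtype.val h) ne34.symm
          | exact absurd (congrArg Subtype.val h) ne35
          | exact absurd (congrArg Subtype.val h) ne35.symm
          | exact absurd (congrArg Subtype.val h) ne45
          | exact absurd (congrArg Subtype.val h) ne45.symm
    · rintro ⟨S, hS⟩
      simp only [Finset.mem_insert, Finset.mem_singleton] at hS
      rcases hS with rfl | rfl | rfl | rfl | rfl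
      · exact ⟨0, rfl⟩
      · exact ⟨1, rfl⟩
      · exact ⟨2, rfl⟩
      · exact ⟨3, rfl⟩
      · exact ⟨4, rfl⟩
    · intro a b
      fin_cases a <;> fin_cases b <;>
        first
          | exact iff_of_true c12 (by rw [SimpleGraph.pathGraph_adj]; decide)
          | exact iff_of_true c21 (by rw [SimpleGraph.pathGraph_adj]; decide)
          | exact iff_of_true c23 (by rw [SimpleGraph.pathGraph_adj]; decide)
          | exact iff_of_true c32 (by rw [SimpleGraph.pathGraph_adj]; decide)
          | exact iff_of_true c34 (by rw [SimpleGraph.pathGraph_adj]; decide)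
          | exact iff_of_true c43 (by rw [SimpleGraph.pathGraph_adj]; decide)
          | exact iff_of_true c45 (by rw [SimpleGraph.pathGraph_adj]; decide)
          | exact iff_of_true c54 (by rw [SimpleGraph.pathGraph_adj]; decide)
          | exact iff_of_false (not_coalition_self _ _)
              (by rw [SimpleGraph.pathGraph_adj]; decide)
          | exact iff_of_false (not_coalition_of _ _ _ nd13)
              (by rw [SimpleGraph.pathGraph_adj]; decide)
          | exact iff_of_false (not_coalition_of' _ _ _ nd13)
              (by rw [SimpleGraph.pathGraph_adj]; decide)
          | exact iff_of_false (not_coalition_of _ _ _ nd14)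
              (by rw [SimpleGraph.pathGraph_adj]; decide)
          | exact iff_of_false (not_coalition_of' _ _ _ nd14)
              (by rw [SimpleGraph.pathGraph_adj]; decide)
          | exact iff_of_false (not_coalition_of _ _ _ nd15)
              (by rw [SimpleGraph.pathGraph_adj]; decide)
          | exact iff_of_false (not_coalition_of' _ _ _ nd15)
              (by rw [SimpleGraph.pathGraph_adj]; decide)
          | exact iff_of_false (not_coalition_of _ _ _ nd24)
              (by rw [SimpleGraph.pathGraph_adj]; decide)
          | exact iff_of_false (not_coalition_of' _ _ _ nd24)
              (by rw [SimpleGraph.pathGraph_adj]; decide)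
          | exact iff_of_false (not_coalition_of _ _ _ nd25)
              (by rw [SimpleGraph.pathGraph_adj]; decide)
          | exact iff_of_false (not_coalition_of' _ _ _ nd25)
              (by rw [SimpleGraph.pathGraph_adj]; decide)
          | exact iff_of_false (not_coalition_of _ _ _ nd35)
              (by rw [SimpleGraph.pathGraph_adj]; decide)
          | exact iff_of_false (not_coalition_of' _ _ _ nd35)
              (by rw [SimpleGraph.pathGraph_adj]; decide)
end
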